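/- Let F and G be cumulative distribution functions on ℝ with F ≤_st G. Suppose (X,Y), (X^c,Y^c), (X',Y') are all pairs of random variables on an atomless probability space belonging to F^o_2(F,G), such that (X^c,Y^c) is comonotonic and (X',Y') is DL-coupled (its joint distribution function is D_*^{F,G}). Then X^c + Y^c ≤_cv X + Y ≤_cv X' + Y', i.e., the comonotonic sum is smallest and the DL-coupled sum is largest in concave order among all sums X+Y with (X,Y) ∈ F^o_2(F,G). -/

import Mathlib

open MeasureTheory Set Filter

noncomputable section

variable {Ω : Type*} [MeasurableSpace Ω]

/-- A cumulative distribution function on `ℝ`. -/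
structure IsCDF (F : ℝ → ℝ) : Prop where
  mono : Monotone F
  right_cont : ∀ x, ContinuousWithinAt F (Set.Ici x) x
  tendsto_atBot : Filter.Tendsto F Filter.atBot (nhds 0)
  tendsto_atTop : Filter.Tendsto F Filter.atTop (nhds 1)

/-- The probability space is atomless. -/
def Atomless (μ : Measure Ω) : Prop :=
  ∀ s : Set Ω, MeasurableSet s → 0 < μ s →
    ∃ t : Set Ω, MeasurableSet t ∧ t ⊆ s ∧ 0 < μ t ∧ μ t < μ s

/-- The distribution function of a random variable. -/
def distFun (μ : Measure Ω) (X : Ω → ℝ) : ℝ → ℝ :=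
  fun x => (μ {ω | X ω ≤ x}).toReal

/-- `X` is a random variable distributed according to `F`. -/
def HasCDF (μ : Measure Ω) (X : Ω → ℝ) (F : ℝ → ℝ) : Prop :=
  Measurable X ∧ ∀ x, distFun μ X x = F x

/-- Stochastic order `F ≤_st G`, i.e. `G(x) ≤ F(x)` for all `x`. -/
def StOrder (F G : ℝ → ℝ) : Prop := ∀ x, G x ≤ F x

/-- The ordered-coupling set `F^o_2(F,G)`: `X ~ F`, `Y ~ G`, `X ≤ Y` a.s. -/
def OrderedCoupling (μ : Measure Ω) (F G : ℝ → ℝ) (X Y : Ω → ℝ) : Prop :=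
  HasCDF μ X F ∧ HasCDF μ Y G ∧ ∀ᵐ ω ∂μ, X ω ≤ Y ω

/-- The directional lower (DL) coupling distribution function `D_*^{F,G}`. -/
def DLdf (F G : ℝ → ℝ) (x y : ℝ) : ℝ :=
  if y ≤ x then G y else F x - sInf ((fun z => F z - G z) '' Set.Icc x y)

/-- `(X,Y)` is DL-coupled: its joint distribution function is `D_*^{F,G}`. -/
def IsDLCoupled (μ : Measure Ω) (F G : ℝ → ℝ) (X Y : Ω → ℝ) : Prop :=
  ∀ x y : ℝ, (μ {ω | X ω ≤ x ∧ Y ω ≤ y}).toReal = DLdf F G x y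

/-- `(X,Y)` is comonotonic. -/
def Comonotonic (μ : Measure Ω) (X Y : Ω → ℝ) : Prop :=
  ∃ (U : Ω → ℝ) (f g : ℝ → ℝ), Monotone f ∧ Monotone g ∧
    (∀ᵐ ω ∂μ, X ω = f (U ω)) ∧ (∀ᵐ ω ∂μ, Y ω = g (U ω))

/-- Concave order for random variables on the same space:
`E[u(X)] ≤ E[u(Y)]` for every concave `u` for which both expectations exist. -/
def ConcaveOrderRV (μ : Measure Ω) (X Y : Ω → ℝ) : Prop :=
  ∀ u : ℝ → ℝ, ConcaveOn ℝ Set.univ u →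
    Integrable (fun ω => u (X ω)) μ → Integrable (fun ω => u (Y ω)) μ →
    ∫ ω, u (X ω) ∂μ ≤ ∫ ω, u (Y ω) ∂μ


section MyAuxiliary

open scoped ENNReal NNReal

/-- Concavity: the value at an intermediate point dominates the min of endpoint values. -/
lemma my_concave_min_le {u : ℝ → ℝ} (hu : ConcaveOn ℝ Set.univ u) {x y z : ℝ}
    (h1 : x ≤ y) (h2 : y ≤ z) : min (u x) (u z) ≤ u y := by
  rcases eq_or_lt_of_le (h1.trans h2) with hxz | hxz
  · have hxy : x = y := le_antisymm h1 (hxz ▸ h2)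
    rw [← hxy]; exact min_le_left (u x) (u z)
  · set a : ℝ := (z - y) / (z - x) with ha_def
    set b : ℝ := (y - x) / (z - x) with hb_def
    have hzx : (0:ℝ) < z - x := by linarith
    have ha : 0 ≤ a := div_nonneg (by linarith) hzx.le
    have hb : 0 ≤ b := div_nonneg (by linarith) hzx.le
    have hab : a + b = 1 := by
      rw [ha_def, hb_def, ← add_div, div_eq_one_iff_eq hzx.ne']
      ring
    have hy : a • x + b • z = y := by
      simp only [smul_eq_mul, ha_def, hb_def]
      field_simp
      ring
    have := hu.2 (Set.mem_univ x) (Set.mem_univ z) ha hb hab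
    rw [hy] at this
    calc min (u x) (u z) = a * min (u x) (u z) + b * min (u x) (u z) := by
          rw [← add_mul, hab, one_mul]
      _ ≤ a * u x + b * u z := by
          gcongr
          · exact min_le_left _ _
          · exact min_le_right _ _
      _ ≤ u y := by simpa [smul_eq_mul] using this

variable (μ : Measure Ω) [IsProbabilityMeasure μ]

/-- Tonelli swap for sections of a measurable set in `Ω × ℝ`. -/
lemma my_swap_meas {E : Set (Ω × ℝ)} (hE : MeasurableSet E) :
    ∫⁻ ω, (volume : Measure ℝ) {r | (ω, r) ∈ E} ∂μ = ∫⁻ r, μ {ω | (ω, r) ∈ E} := by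
  have h1 := Measure.prod_apply (μ := μ) (ν := volume) hE
  have h2 := Measure.prod_apply_symm (μ := μ) (ν := volume) hE
  rw [h1] at h2
  simpa [Set.preimage] using h2

/-- The put functional as an integral of the sub-distribution function (strict version). -/
lemma my_put_eq {S : Ω → ℝ} (hS : Measurable S) (t : ℝ) :
    ∫⁻ ω, ENNReal.ofReal (t - S ω) ∂μ
      = ∫⁻ r in Set.Iio t, μ {ω | S ω < r} := by
  have hE : MeasurableSet {p : Ω × ℝ | S p.1 < p.2 ∧ p.2 < t} := by
    apply MeasurableSet.inter
    · exact measurableSet_lt (hS.comp measurable_fst) measurable_snd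
    · exact measurableSet_lt measurable_snd measurable_const
  have key := my_swap_meas μ hE
  have hL : ∀ ω, (volume : Measure ℝ) {r | S ω < r ∧ r < t} = ENNReal.ofReal (t - S ω) := by
    intro ω
    have : {r | S ω < r ∧ r < t} = Set.Ioo (S ω) t := rfl
    rw [this, Real.volume_Ioo]
  have hR : ∀ r : ℝ, μ {ω | S ω < r ∧ r < t}
      = (Set.Iio t).indicator (fun r => μ {ω | S ω < r}) r := by
    intro r
    by_cases hr : r < t
    · simp only [Set.indicator_of_mem (Set.mem_Iio.mpr hr)]
      congr 1
      ext ω; simp [hr]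
    · simp only [Set.indicator_of_notMem (fun h => hr (Set.mem_Iio.mp h))]
      have : {ω | S ω < r ∧ r < t} = ∅ := by ext ω; simp [hr]
      simp [this]
  calc ∫⁻ ω, ENNReal.ofReal (t - S ω) ∂μ
      = ∫⁻ ω, (volume : Measure ℝ) {r | S ω < r ∧ r < t} ∂μ := by
        exact (lintegral_congr fun ω => (hL ω).symm)
    _ = ∫⁻ r, μ {ω | S ω < r ∧ r < t} := key
    _ = ∫⁻ r, (Set.Iio t).indicator (fun r => μ {ω | S ω < r}) r := lintegral_congr hR
    _ = ∫⁻ r in Set.Iio t, μ {ω | S ω < r} := lintegral_indicator measurableSet_Iio _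

/-- Put of a sum in terms of the joint sub-distribution function. -/
lemma my_put_sum {X Y : Ω → ℝ} (hX : Measurable X) (hY : Measurable Y) (t : ℝ) :
    ∫⁻ ω, ENNReal.ofReal (t - (X ω + Y ω)) ∂μ
      = ∫⁻ a, μ {ω | X ω ≤ a ∧ Y ω ≤ t - a} := by
  have hE : MeasurableSet {p : Ω × ℝ | X p.1 ≤ p.2 ∧ Y p.1 ≤ t - p.2} := by
    apply MeasurableSet.inter
    · exact measurableSet_le (hX.comp measurable_fst) measurable_snd
    · exact measurableSet_le (hY.comp measurable_fst) (measurable_const.sub measurable_snd)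
  have key := my_swap_meas μ hE
  have hL : ∀ ω, (volume : Measure ℝ) {r | X ω ≤ r ∧ Y ω ≤ t - r}
      = ENNReal.ofReal (t - (X ω + Y ω)) := by
    intro ω
    have : {r | X ω ≤ r ∧ Y ω ≤ t - r} = Set.Icc (X ω) (t - Y ω) := by
      ext r; simp [Set.mem_Icc, and_congr_right_iff]; intro _; constructor <;> intro h <;> linarith
    rw [this, Real.volume_Icc]
    congr 1; ring
  calc ∫⁻ ω, ENNReal.ofReal (t - (X ω + Y ω)) ∂μ
      = ∫⁻ ω, (volume : Measure ℝ) {r | X ω ≤ r ∧ Y ω ≤ t - r} ∂μ :=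
        (lintegral_congr fun ω => (hL ω).symm)
    _ = ∫⁻ a, μ {ω | X ω ≤ a ∧ Y ω ≤ t - a} := key

/-- Call of a sum in terms of the joint survival function. -/
lemma my_call_sum {X Y : Ω → ℝ} (hX : Measurable X) (hY : Measurable Y) (t : ℝ) :
    ∫⁻ ω, ENNReal.ofReal ((X ω + Y ω) - t) ∂μ
      = ∫⁻ a, μ {ω | a < X ω ∧ t - a < Y ω} := by
  have hE : MeasurableSet {p : Ω × ℝ | p.2 < X p.1 ∧ t - p.2 < Y p.1} := by
    apply MeasurableSet.inter
    · exact measurableSet_lt measurable_snd (hX.comp measurable_fst)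
    · exact measurableSet_lt (measurable_const.sub measurable_snd) (hY.comp measurable_fst)
  have key := my_swap_meas μ hE
  have hL : ∀ ω, (volume : Measure ℝ) {r | r < X ω ∧ t - r < Y ω}
      = ENNReal.ofReal ((X ω + Y ω) - t) := by
    intro ω
    have : {r | r < X ω ∧ t - r < Y ω} = Set.Ioo (t - Y ω) (X ω) := by
      ext r; simp only [Set.mem_setOf_eq, Set.mem_Ioo]; constructor <;> intro h <;>
        exact ⟨by linarith [h.1, h.2], by linarith [h.1, h.2]⟩
    rw [this, Real.volume_Ioo]
    congr 1; ring
  calc ∫⁻ ω, ENNReal.ofReal ((X ω + Y ω) - t) ∂μ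
      = ∫⁻ ω, (volume : Measure ℝ) {r | r < X ω ∧ t - r < Y ω} ∂μ :=
        (lintegral_congr fun ω => (hL ω).symm)
    _ = ∫⁻ a, μ {ω | a < X ω ∧ t - a < Y ω} := key

/-- Inclusion–exclusion for the survival function. -/
lemma my_survival {X Y : Ω → ℝ} (hX : Measurable X) (hY : Measurable Y) (a b : ℝ) :
    μ {ω | a < X ω ∧ b < Y ω} + (μ {ω | X ω ≤ a} + μ {ω | Y ω ≤ b})
      = 1 + μ {ω | X ω ≤ a ∧ Y ω ≤ b} := by
  set A := {ω | X ω ≤ a} with hA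
  set B := {ω | Y ω ≤ b} with hB
  have hAm : MeasurableSet A := hX measurableSet_Iic
  have hBm : MeasurableSet B := hY measurableSet_Iic
  have hcompl : {ω | a < X ω ∧ b < Y ω} = (A ∪ B)ᶜ := by
    ext ω; simp [hA, hB, not_or, not_le]
  have h1 : μ (A ∪ B) + μ (A ∪ B)ᶜ = 1 := prob_add_prob_compl (hAm.union hBm)
  have h2 : μ (A ∪ B) + μ (A ∩ B) = μ A + μ B := measure_union_add_inter A hBm
  have hAB : {ω | X ω ≤ a ∧ Y ω ≤ b} = A ∩ B := rfl
  rw [hcompl, hAB]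
  calc μ (A ∪ B)ᶜ + (μ A + μ B) = μ (A ∪ B)ᶜ + (μ (A ∪ B) + μ (A ∩ B)) := by rw [h2]
    _ = (μ (A ∪ B) + μ (A ∪ B)ᶜ) + μ (A ∩ B) := by ring
    _ = 1 + μ (A ∩ B) := by rw [h1]

section MyAuxKernel

variable (μ : Measure Ω) [IsProbabilityMeasure μ]

/-- Key kernel comparison: integrating a nonnegative antitone, eventually-zero kernel
against the sub-distribution functions preserves the put ordering. -/
lemma my_key_kernel {S1 S2 : Ω → ℝ} (hS1 : Measurable S1) (hS2 : Measurable S2)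
    (hput : ∀ t : ℝ, ∫⁻ ω, ENNReal.ofReal (t - S1 ω) ∂μ ≤ ∫⁻ ω, ENNReal.ofReal (t - S2 ω) ∂μ)
    {h : ℝ → ℝ} (hmono : Antitone h) (hpos : ∀ r, 0 ≤ h r) {c : ℝ}
    (hzero : ∀ r, c ≤ r → h r = 0) :
    ∫⁻ r, ENNReal.ofReal (h r) * μ {ω | S1 ω < r}
      ≤ ∫⁻ r, ENNReal.ofReal (h r) * μ {ω | S2 ω < r} := by
  -- rewrite each side as a double integral over (r, v)
  have layer : ∀ S : Ω → ℝ, Measurable S →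
      ∫⁻ r, ENNReal.ofReal (h r) * μ {ω | S ω < r}
        = ∫⁻ v, ∫⁻ r, (Set.Ioo (0:ℝ) (h r)).indicator (fun _ => μ {ω | S ω < r}) v := by
    intro S hS
    have hmeasS : Measurable fun r => μ {ω | S ω < r} := by
      apply Monotone.measurable
      intro r r' hrr'
      exact measure_mono (fun ω hω => lt_of_lt_of_le hω hrr')
    have step1 : ∀ r : ℝ, ENNReal.ofReal (h r) * μ {ω | S ω < r}
        = ∫⁻ v, (Set.Ioo (0:ℝ) (h r)).indicator (fun _ => μ {ω | S ω < r}) v := by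
      intro r
      rw [lintegral_indicator measurableSet_Ioo, setLIntegral_const, Real.volume_Ioo,
        sub_zero, mul_comm]
    rw [lintegral_congr step1]
    have hset : MeasurableSet {p : ℝ × ℝ | 0 < p.2 ∧ p.2 < h p.1} := by
      apply MeasurableSet.inter
      · exact measurableSet_lt measurable_const measurable_snd
      · exact measurableSet_lt measurable_snd ((hmono.measurable).comp measurable_fst)
    have hunc : Measurable (Function.uncurry fun (r v : ℝ) =>
        (Set.Ioo (0:ℝ) (h r)).indicator (fun _ => μ {ω | S ω < r}) v) := by
      have heq : (Function.uncurry fun (r v : ℝ) =>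
          (Set.Ioo (0:ℝ) (h r)).indicator (fun _ => μ {ω | S ω < r}) v)
          = Set.indicator {p : ℝ × ℝ | 0 < p.2 ∧ p.2 < h p.1} (fun p => μ {ω | S ω < p.1}) := by
        funext p
        rcases p with ⟨r, v⟩
        simp only [Function.uncurry, Set.indicator_apply, Set.mem_Ioo, Set.mem_setOf_eq]
      rw [heq]
      exact (hmeasS.comp measurable_fst).indicator hset
    exact lintegral_lintegral_swap hunc.aemeasurable
  rw [layer S1 hS1, layer S2 hS2]
  apply lintegral_mono
  intro v
  dsimp only
  by_cases hv : 0 < v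
  · -- ray structure of superlevel sets
    set A := {r : ℝ | v < h r} with hA_def
    have hAm : MeasurableSet A := measurableSet_lt measurable_const hmono.measurable
    have indic_eq : ∀ (S : Ω → ℝ) (r : ℝ),
        (Set.Ioo (0:ℝ) (h r)).indicator (fun _ => μ {ω | S ω < r}) v
          = A.indicator (fun r => μ {ω | S ω < r}) r := by
      intro S r
      by_cases hr : r ∈ A
      · rw [Set.indicator_of_mem hr, Set.indicator_of_mem (Set.mem_Ioo.mpr ⟨hv, hr⟩)]
      · rw [Set.indicator_of_notMem hr, Set.indicator_of_notMem]
        intro hvm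
        exact hr (Set.mem_setOf_eq ▸ (Set.mem_Ioo.mp hvm).2)
    rw [lintegral_congr (indic_eq S1), lintegral_congr (indic_eq S2),
      lintegral_indicator hAm, lintegral_indicator hAm]
    by_cases hAne : A.Nonempty
    · have hbdd : BddAbove A := by
        refine ⟨c, fun r hr => ?_⟩
        by_contra hrc
        push_neg at hrc
        have := hzero r hrc.le
        rw [hA_def] at hr
        simp only [Set.mem_setOf_eq, this] at hr
        linarith
      set t0 := sSup A with ht0
      have hsub1 : Set.Iio t0 ⊆ A := by
        intro r hr
        obtain ⟨r', hr'A, hrr'⟩ := exists_lt_of_lt_csSup hAne hr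
        exact lt_of_lt_of_le hr'A (hmono hrr'.le)
      have hsub2 : A ⊆ Set.Iic t0 := fun r hr => le_csSup hbdd hr
      have haeeq : A =ᵐ[volume] Set.Iio t0 := by
        rw [Filter.eventuallyEq_set, MeasureTheory.ae_iff]
        apply measure_mono_null (?_ : _ ⊆ ({t0} : Set ℝ)) Real.volume_singleton
        intro x hx
        simp only [Set.mem_setOf_eq, Set.mem_Iio] at hx
        have h3 : ¬ x < t0 := fun hlt => hx (iff_of_true (hsub1 hlt) hlt)
        have h4 : x ∈ A := by
          by_contra h4
          exact hx (iff_of_false h4 h3)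
        exact Set.mem_singleton_iff.mpr (le_antisymm (hsub2 h4) (not_lt.mp h3))
      rw [setLIntegral_congr haeeq, setLIntegral_congr haeeq]
      rw [← my_put_eq μ hS1 t0, ← my_put_eq μ hS2 t0]
      exact hput t0
    · rw [Set.not_nonempty_iff_eq_empty] at hAne
      simp [hAne]
  · -- v ≤ 0 : both sides vanish
    have z : ∀ (S : Ω → ℝ) (r : ℝ),
        (Set.Ioo (0:ℝ) (h r)).indicator (fun _ => μ {ω | S ω < r}) v = 0 := by
      intro S r
      apply Set.indicator_of_notMem
      intro hm
      exact hv (Set.mem_Ioo.mp hm).1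
    rw [lintegral_congr (z S1), lintegral_congr (z S2)]

/-- Convexity: increments are monotone. -/
lemma my_convex_increment {D : ℝ → ℝ} (hD : ConvexOn ℝ Set.univ D) {δ : ℝ} (hδ : 0 ≤ δ) :
    Antitone (fun r => D r - D (r + δ)) := by
  intro r r' hrr'
  rcases eq_or_lt_of_le hrr' with rfl | hlt
  · exact le_rfl
  rcases eq_or_lt_of_le hδ with rfl | hδpos
  · simp
  have hT : (0:ℝ) < r' + δ - r := by linarith
  set α : ℝ := (r' - r) / (r' + δ - r) with hα_def
  set β : ℝ := δ / (r' + δ - r) with hβ_def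
  have hα : 0 ≤ α := div_nonneg (by linarith) hT.le
  have hβ : 0 ≤ β := div_nonneg hδ hT.le
  have hαβ : α + β = 1 := by
    rw [hα_def, hβ_def, ← add_div, div_eq_one_iff_eq hT.ne']
    ring
  have e1 : α • (r' + δ) + β • r = r' := by
    simp only [smul_eq_mul, hα_def, hβ_def]
    field_simp
    ring
  have e2 : β • (r' + δ) + α • r = r + δ := by
    simp only [smul_eq_mul, hα_def, hβ_def]
    field_simp
    ring
  have c1 := hD.2 (Set.mem_univ (r' + δ)) (Set.mem_univ r) hα hβ hαβ
  have c2 := hD.2 (Set.mem_univ (r' + δ)) (Set.mem_univ r) hβ hα (by linarith)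
  rw [e1] at c1
  rw [e2] at c2
  simp only [smul_eq_mul] at c1 c2
  show D r' - D (r' + δ) ≤ D r - D (r + δ)
  have k1 : α * D (r' + δ) + β * D (r' + δ) = D (r' + δ) := by rw [← add_mul, hαβ, one_mul]
  have k2 : α * D r + β * D r = D r := by rw [← add_mul, hαβ, one_mul]
  linarith

def myDn (D : ℝ → ℝ) (n : ℕ) (s : ℝ) : ℝ :=
  ((n:ℝ)+1) * ∫ r in s..(s + 1/((n:ℝ)+1)), D r

def myhfun (D : ℝ → ℝ) (n : ℕ) (r : ℝ) : ℝ :=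
  ((n:ℝ)+1) * (D r - D (r + 1/((n:ℝ)+1)))

lemma my_swap_fun {S : Ω → ℝ} (hS : Measurable S) {k : ℝ → ℝ≥0∞} (hk : Measurable k) :
    ∫⁻ ω, (∫⁻ r in Set.Ioi (S ω), k r ∂volume) ∂μ = ∫⁻ r, k r * μ {ω | S ω < r} := by
  have h1 : ∀ ω, (∫⁻ r in Set.Ioi (S ω), k r ∂volume) = ∫⁻ r, (Set.Ioi (S ω)).indicator k r :=
    fun ω => (lintegral_indicator measurableSet_Ioi k).symm
  rw [lintegral_congr h1]
  have hset : MeasurableSet {p : Ω × ℝ | S p.1 < p.2} :=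
    measurableSet_lt (hS.comp measurable_fst) measurable_snd
  have hunc : Measurable (Function.uncurry fun (ω : Ω) (r : ℝ) =>
      (Set.Ioi (S ω)).indicator k r) := by
    have heq : (Function.uncurry fun (ω : Ω) (r : ℝ) => (Set.Ioi (S ω)).indicator k r)
        = Set.indicator {p : Ω × ℝ | S p.1 < p.2} (fun p => k p.2) := by
      funext p
      rcases p with ⟨ω, r⟩
      simp only [Function.uncurry, Set.indicator_apply, Set.mem_Ioi, Set.mem_setOf_eq]
    rw [heq]
    exact (hk.comp measurable_snd).indicator hset
  rw [lintegral_lintegral_swap hunc.aemeasurable]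
  apply lintegral_congr
  intro r
  have h2 : ∀ ω, (Set.Ioi (S ω)).indicator k r
      = ({ω' : Ω | S ω' < r}).indicator (fun _ => k r) ω := by
    intro ω
    simp only [Set.indicator_apply, Set.mem_Ioi, Set.mem_setOf_eq]
  rw [lintegral_congr h2, lintegral_indicator (measurableSet_lt hS measurable_const), setLIntegral_const, mul_comm]

/-- Main analytic lemma, truncated case: increasing concave `u` constant above `c`. -/
lemma my_lemA' {S1 S2 : Ω → ℝ} (hS1 : Measurable S1) (hS2 : Measurable S2)
    (hput : ∀ t : ℝ, ∫⁻ ω, ENNReal.ofReal (t - S1 ω) ∂μ ≤ ∫⁻ ω, ENNReal.ofReal (t - S2 ω) ∂μ)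
    {u : ℝ → ℝ} (hu : ConcaveOn ℝ Set.univ u) (humono : Monotone u)
    {c : ℝ} (hconst : ∀ s, c ≤ s → u s = u c)
    (hI1 : Integrable (fun ω => u (S1 ω)) μ) (hI2 : Integrable (fun ω => u (S2 ω)) μ) :
    ∫ ω, u (S2 ω) ∂μ ≤ ∫ ω, u (S1 ω) ∂μ := by
  set D : ℝ → ℝ := fun s => u c - u s with hD_def
  have hD0 : ∀ s, 0 ≤ D s := by
    intro s
    rcases le_total s c with h | h
    · exact sub_nonneg.mpr (humono h)
    · exact sub_nonneg.mpr (hconst s h).le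
  have hDanti : Antitone D := fun a b hab => sub_le_sub_left (humono hab) _
  have hDconv : ConvexOn ℝ Set.univ D := by
    have h1 : ConvexOn ℝ Set.univ (fun s => -u s + u c) :=
      hu.neg.add (convexOn_const _ convex_univ)
    have : D = fun s => -u s + u c := by funext s; rw [hD_def]; ring
    rw [this]
    exact h1
  have hucont : Continuous u := by
    rw [← continuousOn_univ]
    exact ConcaveOn.continuousOn isOpen_univ hu
  have hDcont : Continuous D := continuous_const.sub hucont
  have hDzero : ∀ r, c ≤ r → D r = 0 := by
    intro r hr; rw [hD_def]; simp [hconst r hr]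
  have hDint1 : Integrable (fun ω => D (S1 ω)) μ := (integrable_const (u c)).sub hI1
  have hDint2 : Integrable (fun ω => D (S2 ω)) μ := (integrable_const (u c)).sub hI2
  have hDii : ∀ a b : ℝ, IntervalIntegrable D volume a b :=
    fun a b => hDcont.intervalIntegrable a b
  -- the mollified sequence
  set Dn : ℕ → ℝ → ℝ := myDn D with hDn_def
  have hnpos : ∀ n : ℕ, (0:ℝ) < (n:ℝ)+1 := fun n => by positivity
  have hδpos : ∀ n : ℕ, (0:ℝ) < 1/((n:ℝ)+1) := fun n => by positivity
  have hmul : ∀ n : ℕ, ((n:ℝ)+1) * (1/((n:ℝ)+1)) = 1 := fun n => by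
    field_simp
  -- pointwise bounds
  have hDn_le : ∀ n s, Dn n s ≤ D s := by
    intro n s
    have hle : s ≤ s + 1/((n:ℝ)+1) := by linarith [hδpos n]
    have h1 : (∫ r in s..(s + 1/((n:ℝ)+1)), D r) ≤ ∫ r in s..(s + 1/((n:ℝ)+1)), D s :=
      intervalIntegral.integral_mono_on hle (hDii _ _) intervalIntegrable_const
        (fun r hr => hDanti hr.1)
    have h2 : (∫ r in s..(s + 1/((n:ℝ)+1)), D s) = (1/((n:ℝ)+1)) * D s := by
      rw [intervalIntegral.integral_const]
      simp [smul_eq_mul]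
    calc Dn n s ≤ ((n:ℝ)+1) * ((1/((n:ℝ)+1)) * D s) := by
          rw [hDn_def, myDn]
          exact mul_le_mul_of_nonneg_left (h2 ▸ h1) (hnpos n).le
      _ = D s := by rw [← mul_assoc, hmul n, one_mul]
  have hDn_ge : ∀ (n : ℕ) (s : ℝ), D (s + 1/((n:ℝ)+1)) ≤ Dn n s := by
    intro n s
    have hle : s ≤ s + 1/((n:ℝ)+1) := by linarith [hδpos n]
    have h1 : (∫ r in s..(s + 1/((n:ℝ)+1)), D (s + 1/((n:ℝ)+1)))
        ≤ ∫ r in s..(s + 1/((n:ℝ)+1)), D r :=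
      intervalIntegral.integral_mono_on hle intervalIntegrable_const (hDii _ _)
        (fun r hr => hDanti hr.2)
    have h2 : (∫ r in s..(s + 1/((n:ℝ)+1)), D (s + 1/((n:ℝ)+1)))
        = (1/((n:ℝ)+1)) * D (s + 1/((n:ℝ)+1)) := by
      rw [intervalIntegral.integral_const]
      simp [smul_eq_mul]
    calc D (s + 1/((n:ℝ)+1)) = ((n:ℝ)+1) * ((1/((n:ℝ)+1)) * D (s + 1/((n:ℝ)+1))) := by
          rw [← mul_assoc, hmul n, one_mul]
      _ ≤ Dn n s := by
          rw [hDn_def, myDn]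
          exact mul_le_mul_of_nonneg_left (h2 ▸ h1) (hnpos n).le
  have hDn_nonneg : ∀ n s, 0 ≤ Dn n s :=
    fun n s => le_trans (hD0 _) (hDn_ge n s)
  have htendsto : ∀ s, Tendsto (fun n => Dn n s) atTop (nhds (D s)) := by
    intro s
    have hl : Tendsto (fun n : ℕ => D (s + 1/((n:ℝ)+1))) atTop (nhds (D s)) := by
      have h1 : Tendsto (fun n : ℕ => s + 1/((n:ℝ)+1)) atTop (nhds s) := by
        have := tendsto_one_div_add_atTop_nhds_zero_nat (𝕜 := ℝ)
        have h2 := this.const_add s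
        simpa using h2
      exact (hDcont.continuousAt).tendsto.comp h1
    exact tendsto_of_tendsto_of_tendsto_of_le_of_le hl tendsto_const_nhds
      (fun n => hDn_ge n s) (fun n => hDn_le n s)
  -- the kernel
  set hfun : ℕ → ℝ → ℝ := myhfun D with hfun_def
  have hf_nonneg : ∀ n r, 0 ≤ hfun n r := by
    intro n r
    rw [hfun_def]
    unfold myhfun
    exact mul_nonneg (hnpos n).le (sub_nonneg.mpr (hDanti (by linarith [hδpos n])))
  have hf_anti : ∀ n, Antitone (hfun n) := by
    intro n a b hab
    rw [hfun_def]
    unfold myhfun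
    exact mul_le_mul_of_nonneg_left (my_convex_increment hDconv (hδpos n).le hab) (hnpos n).le
  have hf_zero : ∀ (n : ℕ) (r : ℝ), c ≤ r → hfun n r = 0 := by
    intro n r hr
    rw [hfun_def, myhfun]
    rw [hDzero r hr, hDzero _ (by linarith [hδpos n])]
    ring
  have hf_cont : ∀ n, Continuous (hfun n) := by
    intro n
    rw [hfun_def]
    unfold myhfun
    exact continuous_const.mul (hDcont.sub (hDcont.comp (continuous_id.add continuous_const)))
  -- the representation
  have rep : ∀ n s, ENNReal.ofReal (Dn n s)
      = ∫⁻ r in Set.Ioi s, ENNReal.ofReal (hfun n r) := by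
    intro n s
    set δ := 1/((n:ℝ)+1) with hδ_def
    rcases le_total c s with hcs | hsc
    · -- both sides vanish
      have hz1 : Dn n s = 0 := by
        rw [hDn_def, myDn]
        rw [intervalIntegral.integral_congr (g := fun _ => (0:ℝ))
          (fun r hr => by
            apply hDzero
            rcases Set.mem_uIcc.mp hr with h | h
            · linarith [h.1]
            · linarith [h.1, hδpos n])]
        simp
      have hz2 : (∫⁻ r in Set.Ioi s, ENNReal.ofReal (hfun n r)) = 0 := by
        rw [setLIntegral_congr_fun_ae measurableSet_Ioi
          (ae_of_all _ (fun r hr => by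
            rw [hf_zero n r (le_trans hcs (le_of_lt hr))]))]
        simp
      rw [hz1, hz2, ENNReal.ofReal_zero]
    · -- main case s ≤ c
      have hiiH : ∀ a b : ℝ, IntervalIntegrable (fun r => D (r + δ)) volume a b :=
        fun a b => (hDcont.comp (continuous_id.add continuous_const)).intervalIntegrable a b
      have key : Dn n s = ∫ r in s..c, hfun n r := by
        have e1 : (∫ r in s..c, hfun n r)
            = ((n:ℝ)+1) * ∫ r in s..c, (D r - D (r + δ)) := by
          rw [hfun_def]
          simp only [myhfun]
          rw [intervalIntegral.integral_const_mul]
        have e2 : (∫ r in s..c, (D r - D (r + δ)))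
            = (∫ r in s..c, D r) - ∫ r in s..c, D (r + δ) :=
          intervalIntegral.integral_sub (hDii s c) (hiiH s c)
        have e3 : (∫ r in s..c, D (r + δ)) = ∫ r in (s+δ)..(c+δ), D r :=
          intervalIntegral.integral_comp_add_right D δ
        have ch1 : (∫ r in s..c, D r) + (∫ r in c..(c+δ), D r) = ∫ r in s..(c+δ), D r :=
          intervalIntegral.integral_add_adjacent_intervals (hDii s c) (hDii c (c+δ))
        have ch2 : (∫ r in s..(s+δ), D r) + (∫ r in (s+δ)..(c+δ), D r)
            = ∫ r in s..(c+δ), D r :=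
          intervalIntegral.integral_add_adjacent_intervals (hDii s (s+δ)) (hDii (s+δ) (c+δ))
        have z1 : (∫ r in c..(c+δ), D r) = 0 := by
          rw [intervalIntegral.integral_congr (g := fun _ => (0:ℝ))
            (fun r hr => by
              apply hDzero
              rcases Set.mem_uIcc.mp hr with h | h
              · exact h.1
              · linarith [h.1, hδpos n])]
          simp
        rw [hDn_def, myDn, ← hδ_def, e1, e2, e3]
        have : (∫ r in s..c, D r) - (∫ r in (s+δ)..(c+δ), D r) = ∫ r in s..(s+δ), D r := by
          linarith
        rw [this]
      rw [key]
      have hIoc : (∫ r in s..c, hfun n r) = ∫ r in Set.Ioc s c, hfun n r ∂volume :=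
        intervalIntegral.integral_of_le hsc
      rw [hIoc]
      have hIntOn : IntegrableOn (fun r => hfun n r) (Set.Ioc s c) volume := by
        have := (hf_cont n).intervalIntegrable (μ := volume) s c
        rwa [intervalIntegrable_iff_integrableOn_Ioc_of_le hsc] at this
      rw [ofReal_integral_eq_lintegral_ofReal hIntOn
        (ae_of_all _ (fun r => hf_nonneg n r))]
      have hsplit : Set.Ioi s = Set.Ioc s c ∪ Set.Ioi c := (Set.Ioc_union_Ioi_eq_Ioi hsc).symm
      rw [hsplit, lintegral_union measurableSet_Ioi Set.Ioc_disjoint_Ioi_same]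
      have hz : (∫⁻ r in Set.Ioi c, ENNReal.ofReal (hfun n r)) = 0 := by
        rw [setLIntegral_congr_fun_ae measurableSet_Ioi
          (ae_of_all _ (fun r hr => by
            rw [hf_zero n r (le_of_lt hr)]))]
        simp
      rw [hz, add_zero]
  -- continuity of Dn, for measurability
  have hDn_cont : ∀ n, Continuous (Dn n) := by
    intro n
    have hprim : Continuous (fun x : ℝ => ∫ r in (0:ℝ)..x, D r) :=
      intervalIntegral.continuous_primitive hDii 0
    have : ∀ s : ℝ, (∫ r in s..(s + 1/((n:ℝ)+1)), D r)
        = (∫ r in (0:ℝ)..(s + 1/((n:ℝ)+1)), D r) - ∫ r in (0:ℝ)..s, D r := by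
      intro s
      have := intervalIntegral.integral_add_adjacent_intervals
        (hDii 0 s) (hDii s (s + 1/((n:ℝ)+1)))
      linarith
    rw [hDn_def]
    unfold myDn
    apply continuous_const.mul
    apply Continuous.congr (f := fun s : ℝ =>
      (∫ r in (0:ℝ)..(s + 1/((n:ℝ)+1)), D r) - ∫ r in (0:ℝ)..s, D r)
    · exact (hprim.comp (continuous_id.add continuous_const)).sub hprim
    · intro s
      exact (this s).symm
  -- the per-n comparison
  have comp_n : ∀ n, (∫ ω, Dn n (S1 ω) ∂μ) ≤ ∫ ω, Dn n (S2 ω) ∂μ := by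
    intro n
    have hk : Measurable fun r => ENNReal.ofReal (hfun n r) :=
      ENNReal.measurable_ofReal.comp (hf_cont n).measurable
    have lhs1 : (∫⁻ ω, ENNReal.ofReal (Dn n (S1 ω)) ∂μ)
        = ∫⁻ r, ENNReal.ofReal (hfun n r) * μ {ω | S1 ω < r} := by
      rw [lintegral_congr (fun ω => rep n (S1 ω))]
      exact my_swap_fun μ hS1 hk
    have lhs2 : (∫⁻ ω, ENNReal.ofReal (Dn n (S2 ω)) ∂μ)
        = ∫⁻ r, ENNReal.ofReal (hfun n r) * μ {ω | S2 ω < r} := by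
      rw [lintegral_congr (fun ω => rep n (S2 ω))]
      exact my_swap_fun μ hS2 hk
    have hkey := my_key_kernel μ hS1 hS2 hput (hf_anti n) (hf_nonneg n) (hf_zero n)
    have hlin : (∫⁻ ω, ENNReal.ofReal (Dn n (S1 ω)) ∂μ)
        ≤ ∫⁻ ω, ENNReal.ofReal (Dn n (S2 ω)) ∂μ := by
      rw [lhs1, lhs2]; exact hkey
    -- finiteness
    have hfin2 : (∫⁻ ω, ENNReal.ofReal (Dn n (S2 ω)) ∂μ) < ⊤ := by
      calc (∫⁻ ω, ENNReal.ofReal (Dn n (S2 ω)) ∂μ)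
          ≤ ∫⁻ ω, ENNReal.ofReal (D (S2 ω)) ∂μ :=
            lintegral_mono (fun ω => ENNReal.ofReal_le_ofReal (hDn_le n _))
        _ < ⊤ := by
            rw [← hasFiniteIntegral_iff_ofReal (ae_of_all _ (fun ω => hD0 (S2 ω)))]
            exact hDint2.2
    -- to Bochner
    have conv1 : (∫ ω, Dn n (S1 ω) ∂μ)
        = (∫⁻ ω, ENNReal.ofReal (Dn n (S1 ω)) ∂μ).toReal := by
      rw [integral_eq_lintegral_of_nonneg_ae (ae_of_all _ (fun ω => hDn_nonneg n (S1 ω)))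
        (((hDn_cont n).measurable.comp hS1).aemeasurable).aestronglyMeasurable]
    have conv2 : (∫ ω, Dn n (S2 ω) ∂μ)
        = (∫⁻ ω, ENNReal.ofReal (Dn n (S2 ω)) ∂μ).toReal := by
      rw [integral_eq_lintegral_of_nonneg_ae (ae_of_all _ (fun ω => hDn_nonneg n (S2 ω)))
        (((hDn_cont n).measurable.comp hS2).aemeasurable).aestronglyMeasurable]
    rw [conv1, conv2]
    exact ENNReal.toReal_mono hfin2.ne hlin
  -- pass to the limit
  have hT1 : Tendsto (fun n => ∫ ω, Dn n (S1 ω) ∂μ) atTop (nhds (∫ ω, D (S1 ω) ∂μ)) := by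
    apply tendsto_integral_of_dominated_convergence (fun ω => D (S1 ω))
    · exact fun n => (((hDn_cont n).measurable.comp hS1).aemeasurable).aestronglyMeasurable
    · exact hDint1
    · intro n
      apply ae_of_all
      intro ω
      rw [Real.norm_eq_abs, abs_of_nonneg (hDn_nonneg n _)]
      exact hDn_le n _
    · exact ae_of_all _ (fun ω => htendsto (S1 ω))
  have hT2 : Tendsto (fun n => ∫ ω, Dn n (S2 ω) ∂μ) atTop (nhds (∫ ω, D (S2 ω) ∂μ)) := by
    apply tendsto_integral_of_dominated_convergence (fun ω => D (S2 ω))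
    · exact fun n => (((hDn_cont n).measurable.comp hS2).aemeasurable).aestronglyMeasurable
    · exact hDint2
    · intro n
      apply ae_of_all
      intro ω
      rw [Real.norm_eq_abs, abs_of_nonneg (hDn_nonneg n _)]
      exact hDn_le n _
    · exact ae_of_all _ (fun ω => htendsto (S2 ω))
  have hDle : (∫ ω, D (S1 ω) ∂μ) ≤ ∫ ω, D (S2 ω) ∂μ :=
    le_of_tendsto_of_tendsto' hT1 hT2 comp_n
  -- unfold D
  have unf1 : (∫ ω, D (S1 ω) ∂μ) = u c - ∫ ω, u (S1 ω) ∂μ := by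
    rw [hD_def]
    rw [integral_sub (integrable_const (u c)) hI1]
    simp
  have unf2 : (∫ ω, D (S2 ω) ∂μ) = u c - ∫ ω, u (S2 ω) ∂μ := by
    rw [hD_def]
    rw [integral_sub (integrable_const (u c)) hI2]
    simp
  rw [unf1, unf2] at hDle
  linarith

/-- Truncation from above at `c` (evaluation of `u` at `min s c`). -/
def myMinT (u : ℝ → ℝ) (c : ℝ) : ℝ → ℝ := fun s => u (min s c)

/-- Truncation from below at `c`, normalized. -/
def myMaxT (u : ℝ → ℝ) (c : ℝ) : ℝ → ℝ := fun s => u (max s c) - u c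

lemma myMinT_concave {u : ℝ → ℝ} (hu : ConcaveOn ℝ Set.univ u) {c : ℝ}
    (hub : ∀ z, z ≤ c → u z ≤ u c) : ConcaveOn ℝ Set.univ (myMinT u c) := by
  refine ⟨convex_univ, ?_⟩
  intro x _ y _ a b ha hb hab
  simp only [myMinT, smul_eq_mul]
  have hw1 : a * min x c + b * min y c ≤ min (a * x + b * y) c := by
    apply le_min
    · have := mul_le_mul_of_nonneg_left (min_le_left x c) ha
      have := mul_le_mul_of_nonneg_left (min_le_left y c) hb
      linarith
    · have h1 := mul_le_mul_of_nonneg_left (min_le_right x c) ha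
      have h2 := mul_le_mul_of_nonneg_left (min_le_right y c) hb
      have h3 : a * c + b * c = c := by rw [← add_mul, hab, one_mul]
      linarith
  have hw2 : min (a * x + b * y) c ≤ c := min_le_right _ _
  have hwc : a * min x c + b * min y c ≤ c := le_trans hw1 hw2
  have h3 := my_concave_min_le hu hw1 hw2
  have h4 : min (u (a * min x c + b * min y c)) (u c) = u (a * min x c + b * min y c) :=
    min_eq_left (hub _ hwc)
  rw [h4] at h3
  have h5 := hu.2 (Set.mem_univ (min x c)) (Set.mem_univ (min y c)) ha hb hab
  simp only [smul_eq_mul] at h5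
  linarith

lemma myMaxT_concave {u : ℝ → ℝ} (hu : ConcaveOn ℝ Set.univ u) {c : ℝ}
    (hlb : ∀ z, c ≤ z → u z ≤ u c) : ConcaveOn ℝ Set.univ (myMaxT u c) := by
  refine ⟨convex_univ, ?_⟩
  intro x _ y _ a b ha hb hab
  simp only [myMaxT, smul_eq_mul]
  have hw1 : max (a * x + b * y) c ≤ a * max x c + b * max y c := by
    apply max_le
    · have := mul_le_mul_of_nonneg_left (le_max_left x c) ha
      have := mul_le_mul_of_nonneg_left (le_max_left y c) hb
      linarith
    · have h1 := mul_le_mul_of_nonneg_left (le_max_right x c) ha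
      have h2 := mul_le_mul_of_nonneg_left (le_max_right y c) hb
      have h3 : a * c + b * c = c := by rw [← add_mul, hab, one_mul]
      linarith
  have hw2 : c ≤ max (a * x + b * y) c := le_max_right _ _
  have hwc : c ≤ a * max x c + b * max y c := le_trans hw2 hw1
  have h3 := my_concave_min_le hu hw2 hw1
  have h4 : min (u c) (u (a * max x c + b * max y c)) = u (a * max x c + b * max y c) :=
    min_eq_right (hlb _ hwc)
  rw [h4] at h3
  have h5 := hu.2 (Set.mem_univ (max x c)) (Set.mem_univ (max y c)) ha hb hab
  simp only [smul_eq_mul] at h5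
  have h6 : a * u c + b * u c = u c := by rw [← add_mul, hab, one_mul]
  nlinarith [hab]

/-- Lemma A: increasing concave order from put domination. -/
lemma my_lemA {S1 S2 : Ω → ℝ} (hS1 : Measurable S1) (hS2 : Measurable S2)
    (hput : ∀ t : ℝ, ∫⁻ ω, ENNReal.ofReal (t - S1 ω) ∂μ ≤ ∫⁻ ω, ENNReal.ofReal (t - S2 ω) ∂μ)
    {u : ℝ → ℝ} (hu : ConcaveOn ℝ Set.univ u) (humono : Monotone u)
    (hI1 : Integrable (fun ω => u (S1 ω)) μ) (hI2 : Integrable (fun ω => u (S2 ω)) μ) :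
    ∫ ω, u (S2 ω) ∂μ ≤ ∫ ω, u (S1 ω) ∂μ := by
  have hucont : Continuous u := by
    rw [← continuousOn_univ]
    exact ConcaveOn.continuousOn isOpen_univ hu
  have hmincont : ∀ N : ℕ, Continuous (myMinT u N) := by
    intro N
    exact hucont.comp (continuous_id.min continuous_const)
  have hIN : ∀ (N : ℕ) (S : Ω → ℝ), Measurable S → Integrable (fun ω => u (S ω)) μ →
      Integrable (fun ω => myMinT u N (S ω)) μ := by
    intro N S hS hIS
    apply Integrable.mono' (hIS.abs.add (integrable_const |u (N:ℝ)|))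
    · exact ((hmincont N).measurable.comp hS).aestronglyMeasurable
    · apply ae_of_all
      intro ω
      rw [Real.norm_eq_abs]
      rcases le_total (S ω) (N:ℝ) with h | h
      · rw [myMinT, min_eq_left h]
        have := le_abs_self (u (S ω))
        have := abs_nonneg (u ((N:ℝ)))
        calc |u (S ω)| ≤ |u (S ω)| + |u ((N:ℝ))| := by linarith [abs_nonneg (u ((N:ℝ)))]
          _ = _ := rfl
      · rw [myMinT, min_eq_right h]
        calc |u ((N:ℝ))| ≤ |u (S ω)| + |u ((N:ℝ))| := by linarith [abs_nonneg (u (S ω))]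
          _ = _ := rfl
  have compN : ∀ N : ℕ, (∫ ω, myMinT u N (S2 ω) ∂μ) ≤ ∫ ω, myMinT u N (S1 ω) ∂μ := by
    intro N
    apply my_lemA' μ hS1 hS2 hput (u := myMinT u N)
      (myMinT_concave hu (fun z hz => humono hz))
      (fun x y hxy => humono (min_le_min hxy le_rfl))
      (c := (N:ℝ))
      (fun s hs => by rw [myMinT, myMinT, min_eq_right hs, min_self])
      (hIN N S1 hS1 hI1) (hIN N S2 hS2 hI2)
  -- dominated convergence
  have hbound : ∀ (S : Ω → ℝ), ∀ (N : ℕ) (ω : Ω),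
      ‖myMinT u N (S ω)‖ ≤ 2 * |u (S ω)| + |u 0| := by
    intro S N ω
    have hNn : (0:ℝ) ≤ (N:ℝ) := Nat.cast_nonneg N
    have hup : myMinT u N (S ω) ≤ u (S ω) := humono (min_le_left _ _)
    have hlow : u (min (S ω) 0) ≤ myMinT u N (S ω) :=
      humono (min_le_min le_rfl hNn)
    have habs : |u (min (S ω) 0)| ≤ |u (S ω)| + |u 0| := by
      rcases le_total (S ω) 0 with h | h
      · rw [min_eq_left h]; linarith [abs_nonneg (u 0)]
      · rw [min_eq_right h]; linarith [abs_nonneg (u (S ω))]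
    rw [Real.norm_eq_abs, abs_le]
    constructor
    · have := neg_abs_le (u (min (S ω) 0))
      linarith [abs_nonneg (u (S ω)), le_abs_self (u (S ω)), neg_abs_le (u (S ω))]
    · linarith [le_abs_self (u (S ω)), abs_nonneg (u (S ω)), abs_nonneg (u 0)]
  have hlim : ∀ (S : Ω → ℝ) (ω : Ω),
      Tendsto (fun N : ℕ => myMinT u N (S ω)) atTop (nhds (u (S ω))) := by
    intro S ω
    apply tendsto_atTop_of_eventually_const (i₀ := ⌈S ω⌉₊)
    intro N hN
    rw [myMinT, min_eq_left]
    calc S ω ≤ (⌈S ω⌉₊ : ℝ) := Nat.le_ceil _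
      _ ≤ (N : ℝ) := Nat.cast_le.mpr hN
  have hbint : ∀ (S : Ω → ℝ), Integrable (fun ω => u (S ω)) μ →
      Integrable (fun ω => 2 * |u (S ω)| + |u 0|) μ := by
    intro S hIS
    exact ((hIS.abs.const_mul 2).add (integrable_const _))
  have hT1 : Tendsto (fun N : ℕ => ∫ ω, myMinT u N (S1 ω) ∂μ) atTop
      (nhds (∫ ω, u (S1 ω) ∂μ)) := by
    apply tendsto_integral_of_dominated_convergence _
      (fun N => ((hmincont N).measurable.comp hS1).aestronglyMeasurable)
      (hbint S1 hI1)
      (fun N => ae_of_all _ (fun ω => hbound S1 N ω))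
      (ae_of_all _ (fun ω => hlim S1 ω))
  have hT2 : Tendsto (fun N : ℕ => ∫ ω, myMinT u N (S2 ω) ∂μ) atTop
      (nhds (∫ ω, u (S2 ω) ∂μ)) := by
    apply tendsto_integral_of_dominated_convergence _
      (fun N => ((hmincont N).measurable.comp hS2).aestronglyMeasurable)
      (hbint S2 hI2)
      (fun N => ae_of_all _ (fun ω => hbound S2 N ω))
      (ae_of_all _ (fun ω => hlim S2 ω))
  exact le_of_tendsto_of_tendsto' hT2 hT1 compN

/-- Lemma B: decreasing concave order from call domination, by reflection. -/
lemma my_lemB {S1 S2 : Ω → ℝ} (hS1 : Measurable S1) (hS2 : Measurable S2)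
    (hcall : ∀ t : ℝ, ∫⁻ ω, ENNReal.ofReal (S1 ω - t) ∂μ ≤ ∫⁻ ω, ENNReal.ofReal (S2 ω - t) ∂μ)
    {u : ℝ → ℝ} (hu : ConcaveOn ℝ Set.univ u) (huanti : Antitone u)
    (hI1 : Integrable (fun ω => u (S1 ω)) μ) (hI2 : Integrable (fun ω => u (S2 ω)) μ) :
    ∫ ω, u (S2 ω) ∂μ ≤ ∫ ω, u (S1 ω) ∂μ := by
  set v : ℝ → ℝ := fun s => u (-s) with hv_def
  have hvconc : ConcaveOn ℝ Set.univ v := by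
    refine ⟨convex_univ, ?_⟩
    intro x _ y _ a b ha hb hab
    have h1 := hu.2 (Set.mem_univ (-x)) (Set.mem_univ (-y)) ha hb hab
    have h2 : a • -x + b • -y = -(a • x + b • y) := by
      simp only [smul_eq_mul]; ring
    rw [h2] at h1
    exact h1
  have hvmono : Monotone v := fun x y hxy => huanti (neg_le_neg hxy)
  have hres := my_lemA μ hS1.neg hS2.neg (fun t => ?_) hvconc hvmono ?_ ?_
  · have e2 : (fun ω => v (-(S2 ω))) = fun ω => u (S2 ω) := by
      funext ω; rw [hv_def]; simp
    have e1 : (fun ω => v (-(S1 ω))) = fun ω => u (S1 ω) := by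
      funext ω; rw [hv_def]; simp
    calc ∫ ω, u (S2 ω) ∂μ = ∫ ω, v (-(S2 ω)) ∂μ := by rw [e2]
      _ ≤ ∫ ω, v (-(S1 ω)) ∂μ := hres
      _ = ∫ ω, u (S1 ω) ∂μ := by rw [e1]
  · have h1 : ∀ (S : Ω → ℝ) (ω : Ω), ENNReal.ofReal (t - -(S ω)) = ENNReal.ofReal (S ω - -t) := by
      intro S ω; congr 1; ring
    show ∫⁻ ω, ENNReal.ofReal (t - -(S1 ω)) ∂μ ≤ ∫⁻ ω, ENNReal.ofReal (t - -(S2 ω)) ∂μ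
    rw [lintegral_congr (h1 S1), lintegral_congr (h1 S2)]
    exact hcall (-t)
  · have : (fun ω => v (-(S1 ω))) = fun ω => u (S1 ω) := by funext ω; rw [hv_def]; simp
    show Integrable (fun ω => v (-(S1 ω))) μ
    rw [this]; exact hI1
  · have : (fun ω => v (-(S2 ω))) = fun ω => u (S2 ω) := by funext ω; rw [hv_def]; simp
    show Integrable (fun ω => v (-(S2 ω))) μ
    rw [this]; exact hI2

/-- Main comparison lemma: put + call domination imply concave order. -/
lemma my_concave_le {S1 S2 : Ω → ℝ} (hS1 : Measurable S1) (hS2 : Measurable S2)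
    (hput : ∀ t : ℝ, ∫⁻ ω, ENNReal.ofReal (t - S1 ω) ∂μ ≤ ∫⁻ ω, ENNReal.ofReal (t - S2 ω) ∂μ)
    (hcall : ∀ t : ℝ, ∫⁻ ω, ENNReal.ofReal (S1 ω - t) ∂μ ≤ ∫⁻ ω, ENNReal.ofReal (S2 ω - t) ∂μ)
    {u : ℝ → ℝ} (hu : ConcaveOn ℝ Set.univ u)
    (hI2 : Integrable (fun ω => u (S2 ω)) μ) (hI1 : Integrable (fun ω => u (S1 ω)) μ) :
    ∫ ω, u (S2 ω) ∂μ ≤ ∫ ω, u (S1 ω) ∂μ := by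
  have hucont : Continuous u := by
    rw [← continuousOn_univ]
    exact ConcaveOn.continuousOn isOpen_univ hu
  by_cases hmono : Monotone u
  · exact my_lemA μ hS1 hS2 hput hu hmono hI1 hI2
  by_cases hanti : Antitone u
  · exact my_lemB μ hS1 hS2 hcall hu hanti hI1 hI2
  -- non-monotone case: u increases then decreases
  rw [Monotone] at hmono
  push_neg at hmono
  obtain ⟨p, q, hpq, hdec⟩ := hmono
  rw [Antitone] at hanti
  push_neg at hanti
  obtain ⟨p', q', hpq', hinc⟩ := hanti
  set P : ℝ := min p p' - 1 with hP_def
  set Q : ℝ := max q q' + 1 with hQ_def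
  have hPp : P ≤ p := by rw [hP_def]; have := min_le_left p p'; linarith
  have hPp' : P ≤ p' := by rw [hP_def]; have := min_le_right p p'; linarith
  have hqQ : q ≤ Q := by rw [hQ_def]; have := le_max_left q q'; linarith
  have hq'Q : q' ≤ Q := by rw [hQ_def]; have := le_max_right q q'; linarith
  have hPQ : P ≤ Q := le_trans (le_trans hPp hpq) hqQ
  obtain ⟨m, hmI, hmax⟩ := isCompact_Icc.exists_isMaxOn (Set.nonempty_Icc.mpr hPQ)
    (hucont.continuousOn)
  have hmax' : ∀ z ∈ Set.Icc P Q, u z ≤ u m := fun z hz => hmax hz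
  have hglob : ∀ z, u z ≤ u m := by
    intro z
    rcases le_or_gt z Q with hzQ | hzQ
    · rcases le_or_gt P z with hPz | hPz
      · exact hmax' z ⟨hPz, hzQ⟩
      · -- z < P : use the increasing pair
        have h1 := my_concave_min_le hu (le_of_lt (lt_of_lt_of_le hPz hPp')) hpq'
        rcases le_total (u z) (u q') with h | h
        · rw [min_eq_left h] at h1
          exact le_trans h1 (hmax' p' ⟨hPp', le_trans hpq' hq'Q⟩)
        · rw [min_eq_right h] at h1
          exact absurd (lt_of_lt_of_le hinc h1) (lt_irrefl _)
    · -- Q < z : use the decreasing pair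
      have h1 := my_concave_min_le hu hpq (le_of_lt (lt_of_le_of_lt hqQ hzQ))
      rcases le_total (u z) (u p) with h | h
      · rw [min_eq_right h] at h1
        exact le_trans h1 (hmax' q ⟨le_trans hPp hpq, hqQ⟩)
      · rw [min_eq_left h] at h1
        exact absurd (lt_of_lt_of_le hdec h1) (lt_irrefl _)
  -- split u = u1 + u2
  set u1 : ℝ → ℝ := myMinT u m with hu1_def
  set u2 : ℝ → ℝ := myMaxT u m with hu2_def
  have hsum : ∀ s, u s = u1 s + u2 s := by
    intro s
    rw [hu1_def, hu2_def]
    rcases le_total s m with h | h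
    · rw [myMinT, myMaxT, min_eq_left h, max_eq_right h]; ring
    · rw [myMinT, myMaxT, min_eq_right h, max_eq_left h]; ring
  have hu1conc : ConcaveOn ℝ Set.univ u1 := myMinT_concave hu (fun z _ => hglob z)
  have hu2conc : ConcaveOn ℝ Set.univ u2 := myMaxT_concave hu (fun z _ => hglob z)
  have hu1mono : Monotone u1 := by
    intro x y hxy
    rw [hu1_def]
    have h1 := my_concave_min_le hu (min_le_min hxy (le_refl m)) (min_le_right y m)
    rwa [min_eq_left (hglob (min x m))] at h1
  have hu2anti : Antitone u2 := by
    intro x y hxy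
    rw [hu2_def]
    have h1 := my_concave_min_le hu (le_max_right x m) (max_le_max hxy (le_refl m))
    rw [min_eq_right (hglob (max y m))] at h1
    exact sub_le_sub_right h1 _
  have hu1cont : Continuous u1 := hucont.comp (continuous_id.min continuous_const)
  have hu2cont : Continuous u2 :=
    (hucont.comp (continuous_id.max continuous_const)).sub continuous_const
  have hint : ∀ (S : Ω → ℝ), Measurable S → Integrable (fun ω => u (S ω)) μ →
      Integrable (fun ω => u1 (S ω)) μ ∧ Integrable (fun ω => u2 (S ω)) μ := by
    intro S hS hIS
    constructor
    · apply Integrable.mono' (hIS.abs.add (integrable_const |u m|))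
      · exact (hu1cont.measurable.comp hS).aestronglyMeasurable
      · apply ae_of_all
        intro ω
        simp only [Pi.add_apply]
        rw [Real.norm_eq_abs, hu1_def]
        rcases le_total (S ω) m with h | h
        · rw [myMinT, min_eq_left h]; linarith [abs_nonneg (u m)]
        · rw [myMinT, min_eq_right h]; linarith [abs_nonneg (u (S ω))]
    · apply Integrable.mono' (hIS.abs.add (integrable_const (2 * |u m|)))
      · exact (hu2cont.measurable.comp hS).aestronglyMeasurable
      · apply ae_of_all
        intro ω
        simp only [Pi.add_apply]
        rw [Real.norm_eq_abs, hu2_def]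
        rcases le_total (S ω) m with h | h
        · rw [myMaxT, max_eq_right h]
          simp only [sub_self, abs_zero]
          positivity
        · rw [myMaxT, max_eq_left h]
          calc |u (S ω) - u m| ≤ |u (S ω)| + |u m| := abs_sub _ _
            _ ≤ |u (S ω)| + 2 * |u m| := by linarith [abs_nonneg (u m)]
  obtain ⟨hI11, hI12⟩ := hint S1 hS1 hI1
  obtain ⟨hI21, hI22⟩ := hint S2 hS2 hI2
  have e1 : (∫ ω, u (S1 ω) ∂μ) = (∫ ω, u1 (S1 ω) ∂μ) + ∫ ω, u2 (S1 ω) ∂μ := by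
    rw [← integral_add hI11 hI12]
    apply integral_congr_ae
    exact ae_of_all _ (fun ω => hsum (S1 ω))
  have e2 : (∫ ω, u (S2 ω) ∂μ) = (∫ ω, u1 (S2 ω) ∂μ) + ∫ ω, u2 (S2 ω) ∂μ := by
    rw [← integral_add hI21 hI22]
    apply integral_congr_ae
    exact ae_of_all _ (fun ω => hsum (S2 ω))
  rw [e1, e2]
  have c1 := my_lemA μ hS1 hS2 hput hu1conc hu1mono hI11 hI21
  have c2 := my_lemB μ hS1 hS2 hcall hu2conc hu2anti hI12 hI22
  linarith

lemma my_cdf_eq {X X' : Ω → ℝ} {F : ℝ → ℝ} (h1 : HasCDF μ X F) (h2 : HasCDF μ X' F) (a : ℝ) :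
    μ {ω | X ω ≤ a} = μ {ω | X' ω ≤ a} := by
  have e1 := h1.2 a
  have e2 := h2.2 a
  rw [distFun] at e1 e2
  exact (ENNReal.toReal_eq_toReal_iff' (measure_ne_top μ _) (measure_ne_top μ _)).mp
    (e1.trans e2.symm)

lemma my_order_eq {X Y : Ω → ℝ} (hord : ∀ᵐ ω ∂μ, X ω ≤ Y ω) {z a : ℝ} (hza : z ≤ a) :
    μ {ω | X ω ≤ a ∧ Y ω ≤ z} = μ {ω | Y ω ≤ z} := by
  apply le_antisymm (measure_mono (fun ω h => h.2))
  apply measure_mono_ae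
  filter_upwards [hord] with ω h
  intro hYz
  exact ⟨le_trans (le_trans h hYz) hza, hYz⟩

/-- Among ordered couplings the DL coupling has pointwise smallest joint df. -/
lemma my_H_lower {X Y X' Y' : Ω → ℝ} {F G : ℝ → ℝ}
    (hXY : OrderedCoupling μ F G X Y) (hd : OrderedCoupling μ F G X' Y')
    (hDL : IsDLCoupled μ F G X' Y') (a b : ℝ) :
    μ {ω | X' ω ≤ a ∧ Y' ω ≤ b} ≤ μ {ω | X ω ≤ a ∧ Y ω ≤ b} := by
  obtain ⟨⟨hXm, hXF⟩, ⟨hYm, hYG⟩, hord⟩ := hXY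
  apply (ENNReal.toReal_le_toReal (measure_ne_top μ _) (measure_ne_top μ _)).mp
  rw [hDL a b, DLdf]
  by_cases hba : b ≤ a
  · rw [if_pos hba]
    rw [my_order_eq μ hord hba]
    rw [← hYG b]
    rw [distFun]
  · rw [if_neg hba]
    push_neg at hba
    -- split : μ {X ≤ z} = μ {X≤z ∧ Y≤w} + μ {X≤z ∧ w<Y}
    have hsplit : ∀ z w : ℝ, μ {ω | X ω ≤ z}
        = μ {ω | X ω ≤ z ∧ Y ω ≤ w} + μ {ω | X ω ≤ z ∧ w < Y ω} := by
      intro z w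
      have h1 := measure_inter_add_diff (μ := μ) {ω | X ω ≤ z} (hYm (measurableSet_Iic (a := w)))
      have e1 : {ω | X ω ≤ z} ∩ (Y ⁻¹' Set.Iic w) = {ω | X ω ≤ z ∧ Y ω ≤ w} := rfl
      have e2 : {ω | X ω ≤ z} \ (Y ⁻¹' Set.Iic w) = {ω | X ω ≤ z ∧ w < Y ω} := by
        ext ω
        simp [Set.mem_diff, not_le]
      rw [e1, e2] at h1
      exact h1.symm
    -- key bound
    have hkey : ∀ z ∈ Set.Icc a b, (μ {ω | X ω ≤ a ∧ b < Y ω}).toReal ≤ F z - G z := by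
      intro z hz
      have hmono : μ {ω | X ω ≤ a ∧ b < Y ω} ≤ μ {ω | X ω ≤ z ∧ z < Y ω} := by
        apply measure_mono
        intro ω h
        exact ⟨le_trans h.1 hz.1, lt_of_le_of_lt hz.2 h.2⟩
      have hzz := hsplit z z
      have hO := my_order_eq μ hord (le_refl z)
      rw [hO] at hzz
      -- toReal arithmetic: F z = G z + (μ {X≤z ∧ z<Y}).toReal
      have hfin1 : μ {ω | Y ω ≤ z} ≠ ⊤ := measure_ne_top μ _
      have hfin2 : μ {ω | X ω ≤ z ∧ z < Y ω} ≠ ⊤ := measure_ne_top μ _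
      have htr : (μ {ω | X ω ≤ z}).toReal
          = (μ {ω | Y ω ≤ z}).toReal + (μ {ω | X ω ≤ z ∧ z < Y ω}).toReal := by
        rw [hzz, ENNReal.toReal_add hfin1 hfin2]
      have hFz := hXF z
      have hGz := hYG z
      rw [distFun] at hFz hGz
      have hmr := ENNReal.toReal_mono hfin2 hmono
      linarith
    -- conclude
    have hIccne : ((fun z => F z - G z) '' Set.Icc a b).Nonempty :=
      Set.Nonempty.image _ (Set.nonempty_Icc.mpr hba.le)
    have hInf : (μ {ω | X ω ≤ a ∧ b < Y ω}).toReal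
        ≤ sInf ((fun z => F z - G z) '' Set.Icc a b) := by
      apply le_csInf hIccne
      rintro w ⟨z, hz, rfl⟩
      exact hkey z hz
    have hab := hsplit a b
    have htr : (μ {ω | X ω ≤ a}).toReal
        = (μ {ω | X ω ≤ a ∧ Y ω ≤ b}).toReal + (μ {ω | X ω ≤ a ∧ b < Y ω}).toReal := by
      rw [hab, ENNReal.toReal_add (measure_ne_top μ _) (measure_ne_top μ _)]
    have hFa := hXF a
    rw [distFun] at hFa
    linarith

/-- The comonotonic coupling has the pointwise largest joint df. -/
lemma my_H_upper {X Y Xc Yc : Ω → ℝ} {F G : ℝ → ℝ}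
    (hXY : OrderedCoupling μ F G X Y) (hc : OrderedCoupling μ F G Xc Yc)
    (hcom : Comonotonic μ Xc Yc) (a b : ℝ) :
    μ {ω | X ω ≤ a ∧ Y ω ≤ b} ≤ μ {ω | Xc ω ≤ a ∧ Yc ω ≤ b} := by
  obtain ⟨U, f, g, hf, hg, hXc, hYc⟩ := hcom
  have hcongr : μ {ω | Xc ω ≤ a ∧ Yc ω ≤ b} = μ {ω | f (U ω) ≤ a ∧ g (U ω) ≤ b} := by
    apply measure_congr
    filter_upwards [hXc, hYc] with ω h1 h2
    have : (Xc ω ≤ a ∧ Yc ω ≤ b) = (f (U ω) ≤ a ∧ g (U ω) ≤ b) := by rw [h1, h2]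
    exact this
  rw [hcongr]
  have hnested : {v : ℝ | f v ≤ a} ⊆ {v : ℝ | g v ≤ b} ∨
      {v : ℝ | g v ≤ b} ⊆ {v : ℝ | f v ≤ a} := by
    by_contra hcon
    push_neg at hcon
    obtain ⟨hns1, hns2⟩ := hcon
    obtain ⟨x, hx1, hx2⟩ := Set.not_subset.mp hns1
    obtain ⟨y, hy1, hy2⟩ := Set.not_subset.mp hns2
    simp only [Set.mem_setOf_eq] at hx1 hx2 hy1 hy2
    rcases le_total x y with h | h
    · exact hx2 (le_trans (hg h) hy1)
    · exact hy2 (le_trans (hf h) hx1)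
  rcases hnested with hsub | hsub
  · have he : {ω | f (U ω) ≤ a ∧ g (U ω) ≤ b} = {ω | f (U ω) ≤ a} := by
      ext ω
      exact ⟨fun h => h.1, fun h => ⟨h, hsub h⟩⟩
    rw [he]
    have h2 : μ {ω | f (U ω) ≤ a} = μ {ω | Xc ω ≤ a} := by
      apply measure_congr
      filter_upwards [hXc] with ω h1
      have : (f (U ω) ≤ a) = (Xc ω ≤ a) := by rw [h1]
      exact this
    rw [h2, ← my_cdf_eq μ hXY.1 hc.1 a]
    exact measure_mono (fun ω h => h.1)
  · have he : {ω | f (U ω) ≤ a ∧ g (U ω) ≤ b} = {ω | g (U ω) ≤ b} := by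
      ext ω
      exact ⟨fun h => h.2, fun h => ⟨hsub h, h⟩⟩
    rw [he]
    have h2 : μ {ω | g (U ω) ≤ b} = μ {ω | Yc ω ≤ b} := by
      apply measure_congr
      filter_upwards [hYc] with ω h1
      have : (g (U ω) ≤ b) = (Yc ω ≤ b) := by rw [h1]
      exact this
    rw [h2, ← my_cdf_eq μ hXY.2.1 hc.2.1 b]
    exact measure_mono (fun ω h => h.2)

lemma my_put_of_H {X1 Y1 X2 Y2 : Ω → ℝ} (hX1 : Measurable X1) (hY1 : Measurable Y1)
    (hX2 : Measurable X2) (hY2 : Measurable Y2)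
    (hH : ∀ a b : ℝ, μ {ω | X1 ω ≤ a ∧ Y1 ω ≤ b} ≤ μ {ω | X2 ω ≤ a ∧ Y2 ω ≤ b}) (t : ℝ) :
    ∫⁻ ω, ENNReal.ofReal (t - (X1 ω + Y1 ω)) ∂μ
      ≤ ∫⁻ ω, ENNReal.ofReal (t - (X2 ω + Y2 ω)) ∂μ := by
  rw [my_put_sum μ hX1 hY1 t, my_put_sum μ hX2 hY2 t]
  exact lintegral_mono (fun a => hH a (t - a))

lemma my_call_of_H {X1 Y1 X2 Y2 : Ω → ℝ} (hX1 : Measurable X1) (hY1 : Measurable Y1)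
    (hX2 : Measurable X2) (hY2 : Measurable Y2)
    (hMX : ∀ a : ℝ, μ {ω | X1 ω ≤ a} = μ {ω | X2 ω ≤ a})
    (hMY : ∀ b : ℝ, μ {ω | Y1 ω ≤ b} = μ {ω | Y2 ω ≤ b})
    (hH : ∀ a b : ℝ, μ {ω | X1 ω ≤ a ∧ Y1 ω ≤ b} ≤ μ {ω | X2 ω ≤ a ∧ Y2 ω ≤ b}) (t : ℝ) :
    ∫⁻ ω, ENNReal.ofReal ((X1 ω + Y1 ω) - t) ∂μ
      ≤ ∫⁻ ω, ENNReal.ofReal ((X2 ω + Y2 ω) - t) ∂μ := by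
  rw [my_call_sum μ hX1 hY1 t, my_call_sum μ hX2 hY2 t]
  apply lintegral_mono
  intro a
  have s1 := my_survival μ hX1 hY1 a (t - a)
  have s2 := my_survival μ hX2 hY2 a (t - a)
  have hle : μ {ω | a < X1 ω ∧ t - a < Y1 ω} + (μ {ω | X2 ω ≤ a} + μ {ω | Y2 ω ≤ t - a})
      ≤ μ {ω | a < X2 ω ∧ t - a < Y2 ω} + (μ {ω | X2 ω ≤ a} + μ {ω | Y2 ω ≤ t - a}) := by
    rw [← hMX a, ← hMY (t - a), s1, hMX a, hMY (t - a), s2]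
    exact add_le_add le_rfl (hH a (t - a))
  have hfin : μ {ω | X2 ω ≤ a} + μ {ω | Y2 ω ≤ t - a} ≠ ⊤ :=
    ENNReal.add_ne_top.mpr ⟨measure_ne_top μ _, measure_ne_top μ _⟩
  exact (ENNReal.add_le_add_iff_right hfin).mp hle


end MyAuxKernel

end MyAuxiliary

/-- The comonotonic sum is smallest and the DL-coupled sum is largest in concave
order among all sums `X + Y` with `(X,Y) ∈ F^o_2(F,G)`. -/
theorem comonotonic_le_cv_le_DL
    (μ : Measure Ω) [IsProbabilityMeasure μ] (hμ : Atomless μ)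
    (F G : ℝ → ℝ) (hF : IsCDF F) (hG : IsCDF G) (hst : StOrder F G)
    (X Y Xc Yc X' Y' : Ω → ℝ)
    (hXY : OrderedCoupling μ F G X Y)
    (hc : OrderedCoupling μ F G Xc Yc) (hcom : Comonotonic μ Xc Yc)
    (hd : OrderedCoupling μ F G X' Y') (hDL : IsDLCoupled μ F G X' Y') :
    ConcaveOrderRV μ (fun ω => Xc ω + Yc ω) (fun ω => X ω + Y ω) ∧
    ConcaveOrderRV μ (fun ω => X ω + Y ω) (fun ω => X' ω + Y' ω) := by
  have hXm : Measurable X := hXY.1.1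
  have hYm : Measurable Y := hXY.2.1.1
  have hXcm : Measurable Xc := hc.1.1
  have hYcm : Measurable Yc := hc.2.1.1
  have hX'm : Measurable X' := hd.1.1
  have hY'm : Measurable Y' := hd.2.1.1
  constructor
  · -- comonotonic sum is smallest
    intro u hu hIc hIXY
    have hH := my_H_upper μ hXY hc hcom
    exact my_concave_le μ (hXm.add hYm) (hXcm.add hYcm)
      (my_put_of_H μ hXm hYm hXcm hYcm hH)
      (my_call_of_H μ hXm hYm hXcm hYcm
        (my_cdf_eq μ hXY.1 hc.1) (my_cdf_eq μ hXY.2.1 hc.2.1) hH)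
      hu hIc hIXY
  · -- DL sum is largest
    intro u hu hIXY hID
    have hH := my_H_lower μ hXY hd hDL
    exact my_concave_le μ (hX'm.add hY'm) (hXm.add hYm)
      (my_put_of_H μ hX'm hY'm hXm hYm hH)
      (my_call_of_H μ hX'm hY'm hXm hYm
        (my_cdf_eq μ hd.1 hXY.1) (my_cdf_eq μ hd.2.1 hXY.2.1) hH)
      hu hIXY hID
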